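/- Let X and Y be finite posets such that Y has a free skeleton, and let U be an upset of X. Then every weak p-morphism p : U → Y (where U carries the order induced from X) can be extended to a weak p-morphism p⁺ : X → Y with p⁺(u) = p(u) for all u ∈ U. -/

import Mathlib

/-- The set of maximal elements of the subposet `S`. -/
def maxSet {X : Type*} [PartialOrder X] (S : Set X) : Set X :=
  {x | x ∈ S ∧ ∀ y ∈ S, x ≤ y → y = x}

/-- A weak p-morphism: an order preserving map such that for all `x` and all maximal `y`
above `p x` there is a maximal element `z` of `↑x` with `p z = y`. -/
def IsWeakPMorphism {X Y : Type*} [PartialOrder X] [PartialOrder Y] (p : X → Y) : Prop :=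
  Monotone p ∧
    ∀ x : X, ∀ y ∈ maxSet (Set.univ : Set Y), p x ≤ y →
      ∃ z ∈ maxSet (Set.Ici x), p z = y

/-- `s` is a witnessing family for a free skeleton on a poset with least element `bot`:
`s x Y` is the element `s_{x,Y}` (its value is only constrained when `Y` is a nonempty
subset of `max ↑x`). -/
def IsFreeSkeleton {X : Type*} [PartialOrder X] (bot : X) (s : X → Set X → X) : Prop :=
  (∀ (x : X) (Y : Set X), Y.Nonempty → Y ⊆ maxSet (Set.Ici x) →
      x ≤ s x Y ∧ Y = maxSet (Set.Ici (s x Y))) ∧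
  (∀ (x : X) (Y Z : Set X), Y.Nonempty → Z.Nonempty →
      Y ⊆ maxSet (Set.Ici x) → Z ⊆ maxSet (Set.Ici x) → Y ⊆ Z → s x Z ≤ s x Y) ∧
  (∀ (x : X) (Y : Set X), Y.Nonempty → Y ⊆ maxSet (Set.univ : Set X) →
      maxSet (Set.Ici x) ⊆ Y → s bot Y ≤ x)

/-- A poset has a free skeleton when it has a least element together with a witnessing
family `s_{x,Y}` as in `IsFreeSkeleton`. -/
def HasFreeSkeleton (X : Type*) [PartialOrder X] : Prop :=
  ∃ (bot : X) (s : X → Set X → X), IsBot bot ∧ IsFreeSkeleton bot s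

lemma mem_maxSet_Ici_iff {X : Type*} [PartialOrder X] {x m : X} :
    m ∈ maxSet (Set.Ici x) ↔ x ≤ m ∧ ∀ y, m ≤ y → y = m := by
  constructor
  · rintro ⟨h1, h2⟩
    exact ⟨h1, fun y hy => h2 y (le_trans h1 hy) hy⟩
  · rintro ⟨h1, h2⟩
    exact ⟨h1, fun y _ => h2 y⟩

lemma mem_maxSet_univ_iff {X : Type*} [PartialOrder X] {m : X} :
    m ∈ maxSet (Set.univ : Set X) ↔ ∀ y, m ≤ y → y = m := by
  constructor
  · rintro ⟨_, h2⟩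
    exact fun y => h2 y (Set.mem_univ y)
  · intro h
    exact ⟨Set.mem_univ m, fun y _ => h y⟩

lemma exists_max_above {X : Type*} [PartialOrder X] [Finite X] (x : X) :
    ∃ m, m ∈ maxSet (Set.Ici x) := by
  obtain ⟨m, hm, hmax⟩ := (Set.toFinite (Set.Ici x)).exists_maximal ⟨x, le_refl x⟩
  exact ⟨m, hm, fun y hy hle => le_antisymm (hmax hy hle) hle⟩

/-- Let `X` and `Y` be finite posets such that `Y` has a free skeleton and let `U` be an
upset of `X`. Then every weak p-morphism `p : U → Y` (where `U` carries the induced order)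
extends to a weak p-morphism `p⁺ : X → Y`. -/
theorem weakPMorphism_extension
    {X Y : Type*} [PartialOrder X] [PartialOrder Y] [Finite X] [Finite Y]
    (hY : HasFreeSkeleton Y) (U : Set X) (hU : IsUpperSet U)
    (p : U → Y) (hp : IsWeakPMorphism p) :
    ∃ q : X → Y, IsWeakPMorphism q ∧ ∀ u : U, q u = p u := by
  classical
  obtain ⟨bot, s, hbot, hs1, hs2, hs3⟩ := hY
  have hIcibot : Set.Ici bot = (Set.univ : Set Y) := by
    ext y; simp [hbot y]
  obtain ⟨m0, hm0⟩ := exists_max_above bot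
  have hm0max : ∀ y, m0 ≤ y → y = m0 := (mem_maxSet_Ici_iff.mp hm0).2
  have hm0univ : m0 ∈ maxSet (Set.univ : Set Y) := mem_maxSet_univ_iff.mpr hm0max
  -- the coercion of a maximal element of an upper subset is maximal in `X`,
  -- and conversely a maximal element of `X` lying in `U` is maximal in the subtype
  have hcoe_max : ∀ {b : X} (hb : b ∈ U) {z : U},
      z ∈ maxSet (Set.Ici (⟨b, hb⟩ : U)) → (z : X) ∈ maxSet (Set.Ici b) := by
    intro b hb z hz
    rw [mem_maxSet_Ici_iff] at hz ⊢
    refine ⟨hz.1, fun w hw => ?_⟩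
    have hwU : w ∈ U := hU hw z.2
    have : (⟨w, hwU⟩ : U) = z := hz.2 ⟨w, hwU⟩ hw
    exact congrArg Subtype.val this
  -- `p` sends maximal elements of `U` to maximal elements of `Y`
  have hpmax : ∀ (u : U), (∀ y, (u : X) ≤ y → y = (u : X)) →
      ∀ y, p u ≤ y → y = p u := by
    intro u humax y hy
    obtain ⟨y0, hy0⟩ := exists_max_above (p u)
    rw [mem_maxSet_Ici_iff] at hy0
    obtain ⟨z, hz, hpz⟩ := hp.2 u y0 (mem_maxSet_univ_iff.mpr hy0.2) hy0.1
    rw [mem_maxSet_Ici_iff] at hz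
    have hzu : z = u := by
      apply Subtype.ext
      exact humax z hz.1
    rw [hzu] at hpz
    -- p u = y0 is maximal
    rw [← hpz] at hy0
    exact hy0.2 y hy
  -- auxiliary function on maximal elements of `X`
  set g : X → Y := fun m => if h : m ∈ U then p ⟨m, h⟩ else m0 with hg
  have hgmax : ∀ {x : X} {m : X}, m ∈ maxSet (Set.Ici x) → g m ∈ maxSet (Set.univ : Set Y) := by
    intro x m hm
    rw [mem_maxSet_Ici_iff] at hm
    by_cases h : m ∈ U
    · simp only [hg, dif_pos h]
      exact mem_maxSet_univ_iff.mpr (hpmax ⟨m, h⟩ hm.2)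
    · simp only [hg, dif_neg h]
      exact hm0univ
  have hZsub : ∀ x : X, g '' maxSet (Set.Ici x) ⊆ maxSet (Set.Ici bot) := by
    intro x y hy
    rw [hIcibot]
    obtain ⟨m, hm, rfl⟩ := hy
    exact hgmax hm
  have hZsub' : ∀ x : X, g '' maxSet (Set.Ici x) ⊆ maxSet (Set.univ : Set Y) := by
    intro x; rw [← hIcibot]; exact hZsub x
  have hZne : ∀ x : X, (g '' maxSet (Set.Ici x)).Nonempty := by
    intro x
    obtain ⟨m, hm⟩ := exists_max_above x
    exact ⟨g m, m, hm, rfl⟩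
  -- the extension
  set q : X → Y := fun x =>
    if h : x ∈ U then p ⟨x, h⟩
    else if _ : ∀ y, x ≤ y → y = x then m0
    else s bot (g '' maxSet (Set.Ici x)) with hq
  have hqU : ∀ (x : X) (h : x ∈ U), q x = p ⟨x, h⟩ := by
    intro x h; simp only [hq, dif_pos h]
  have hqg : ∀ {x m : X}, m ∈ maxSet (Set.Ici x) → q m = g m := by
    intro x m hm
    rw [mem_maxSet_Ici_iff] at hm
    by_cases h : m ∈ U
    · simp only [hq, hg, dif_pos h]
    · simp only [hq, hg, dif_neg h, dif_pos hm.2]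
  have hqs : ∀ {x : X}, x ∉ U → ¬(∀ y, x ≤ y → y = x) →
      q x = s bot (g '' maxSet (Set.Ici x)) := by
    intro x h1 h2
    simp only [hq, dif_neg h1, dif_neg h2]
  -- on a nonmaximal element outside `U`, the skeleton properties hold
  have hskel : ∀ x : X, bot ≤ s bot (g '' maxSet (Set.Ici x)) ∧
      g '' maxSet (Set.Ici x) = maxSet (Set.Ici (s bot (g '' maxSet (Set.Ici x)))) :=
    fun x => hs1 bot _ (hZne x) (hZsub x)
  -- maximal elements of `Y` above `p u` come from maximal elements of `U` above `u`
  have hkey : ∀ (b : X) (hb : b ∈ U) (y : Y), y ∈ maxSet (Set.Ici (p ⟨b, hb⟩)) →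
      ∃ m ∈ maxSet (Set.Ici b), g m = y := by
    intro b hb y hy
    rw [mem_maxSet_Ici_iff] at hy
    obtain ⟨z, hz, hpz⟩ := hp.2 ⟨b, hb⟩ y (mem_maxSet_univ_iff.mpr hy.2) hy.1
    refine ⟨(z : X), hcoe_max hb hz, ?_⟩
    simp only [hg, dif_pos z.2]
    rw [← hpz]
  refine ⟨q, ⟨?_, ?_⟩, fun u => by simpa using hqU u u.2⟩
  · -- monotonicity
    intro a b hab
    by_cases ha : a ∈ U
    · have hbU : b ∈ U := hU hab ha
      rw [hqU a ha, hqU b hbU]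
      exact hp.1 (show (⟨a, ha⟩ : U) ≤ ⟨b, hbU⟩ from hab)
    · by_cases hamax : ∀ y, a ≤ y → y = a
      · rw [hamax b hab]
      · rw [hqs ha hamax]
        by_cases hbU : b ∈ U
        · rw [hqU b hbU]
          refine hs3 _ _ (hZne a) (hZsub' a) ?_
          intro y hy
          obtain ⟨m, hm, hgm⟩ := hkey b hbU y hy
          rw [mem_maxSet_Ici_iff] at hm
          exact ⟨m, mem_maxSet_Ici_iff.mpr ⟨le_trans hab hm.1, hm.2⟩, hgm⟩
        · by_cases hbmax : ∀ y, b ≤ y → y = b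
          · -- q b = m0
            have hqb : q b = m0 := by simp only [hq, dif_neg hbU, dif_pos hbmax]
            rw [hqb]
            refine hs3 _ _ (hZne a) (hZsub' a) ?_
            intro y hy
            rw [mem_maxSet_Ici_iff] at hy
            have : y = m0 := hm0max y hy.1
            subst this
            refine ⟨b, mem_maxSet_Ici_iff.mpr ⟨hab, hbmax⟩, ?_⟩
            simp only [hg, dif_neg hbU]
          · rw [hqs hbU hbmax]
            refine hs2 bot _ _ (hZne b) (hZne a) (hZsub b) (hZsub a) ?_
            apply Set.image_mono
            intro m hm
            rw [mem_maxSet_Ici_iff] at hm ⊢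
            exact ⟨le_trans hab hm.1, hm.2⟩
  · -- weak p-morphism condition
    intro x y hy hle
    by_cases hx : x ∈ U
    · rw [hqU x hx] at hle
      obtain ⟨z, hz, hpz⟩ := hp.2 ⟨x, hx⟩ y hy hle
      refine ⟨(z : X), hcoe_max hx hz, ?_⟩
      rw [hqU _ z.2]
      rw [← hpz]
    · by_cases hxmax : ∀ y, x ≤ y → y = x
      · have hqx : q x = m0 := by simp only [hq, dif_neg hx, dif_pos hxmax]
        rw [hqx] at hle
        have : y = m0 := hm0max y hle
        refine ⟨x, mem_maxSet_Ici_iff.mpr ⟨le_refl x, hxmax⟩, ?_⟩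
        rw [hqx, this]
      · rw [hqs hx hxmax] at hle
        have hmem : y ∈ maxSet (Set.Ici (s bot (g '' maxSet (Set.Ici x)))) := by
          rw [mem_maxSet_Ici_iff]
          exact ⟨hle, mem_maxSet_univ_iff.mp hy⟩
        rw [← (hskel x).2] at hmem
        obtain ⟨m, hm, hgm⟩ := hmem
        exact ⟨m, hm, by rw [hqg hm, hgm]⟩
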